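/- The function x : [0,a] → ℝ is differentiable at every t ∈ [0,a] (one-sidedly at the endpoints), with derivative x'(t) = f(t, x(t)); moreover x(0) = x₀. Hence x is a solution of the initial value problem x' = f(t,x), x(0) = x₀ on [0,a]. -/

import Mathlib

open Filter Topology Set

set_option maxHeartbeats 1600000 in
/-- The limit function x is differentiable on [0,a] (one-sidedly at the
endpoints) with x'(t) = f(t, x(t)), and x(0) = x₀: it solves the IVP on [0,a]. -/
theorem limit_function_solves_ivp
    (a M L x₀ : ℝ) (ha : 0 < a) (hM : 0 < M) (hL : 0 < L)
    (U : Set (ℝ × ℝ))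
    (hU : U = Set.Icc (0 : ℝ) a ×ˢ Set.Icc (x₀ - M * a) (x₀ + M * a))
    (f : ℝ × ℝ → ℝ)
    (hf_lip : ∀ u ∈ U, ∀ v ∈ U, |f u - f v| ≤ L * (|u.1 - v.1| + |u.2 - v.2|))
    (hf_bdd : ∀ u ∈ U, |f u| ≤ M)
    (X : ℕ → ℕ → ℝ)
    (hX0 : ∀ m, X m 0 = x₀)
    (hXs : ∀ m k, X m (k + 1) = X m k + a / 2 ^ m * f (a * k / 2 ^ m, X m k))
    (x : ℝ → ℝ)
    (hx_dyadic : ∀ m k : ℕ, k ≤ 2 ^ m →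
      Tendsto (fun n : ℕ => X (m + n) (2 ^ n * k)) atTop (𝓝 (x (a * k / 2 ^ m))))
    (hx_lip : ∀ t ∈ Set.Icc (0 : ℝ) a, ∀ s ∈ Set.Icc (0 : ℝ) a, |x t - x s| ≤ M * |t - s|) :
    x 0 = x₀ ∧
    ∀ t ∈ Set.Icc (0 : ℝ) a, HasDerivWithinAt x (f (t, x t)) (Set.Icc (0 : ℝ) a) t := by
  have h2 : ∀ m : ℕ, (0:ℝ) < 2 ^ m := fun m => by positivity
  set C : ℝ := L * (1 + M) with hC_def
  have hC : 0 < C := by positivity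
  -- x 0 = x₀
  have hx0 : x 0 = x₀ := by
    have h := hx_dyadic 0 0 (by norm_num)
    simp only [Nat.mul_zero, hX0, Nat.cast_zero, mul_zero, zero_div] at h
    exact tendsto_nhds_unique h tendsto_const_nhds
  -- membership helper
  have hmemU : ∀ m k : ℕ, k ≤ 2 ^ m → |X m k - x₀| ≤ M * a →
      (a * k / 2 ^ m, X m k) ∈ U := by
    intro m k hk hb
    rw [hU]
    constructor
    · constructor
      · positivity
      · rw [div_le_iff₀ (h2 m)]
        have : (k : ℝ) ≤ 2 ^ m := by exact_mod_cast Nat.cast_le.mpr hk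
        nlinarith
    · have := abs_le.1 hb
      constructor <;> simp only [] <;> linarith [this.1, this.2]
  -- bound on iterates
  have hXbd : ∀ m k, k ≤ 2 ^ m → |X m k - x₀| ≤ M * (a * k / 2 ^ m) := by
    intro m k
    induction k with
    | zero => intro _; simp [hX0]
    | succ k ih =>
      intro hk1
      have hk : k ≤ 2 ^ m := Nat.le_of_succ_le hk1
      have hb := ih hk
      have hbMa : |X m k - x₀| ≤ M * a := by
        refine hb.trans ?_
        have hkr : (k : ℝ) ≤ 2 ^ m := by exact_mod_cast Nat.cast_le.mpr hk
        have h' : a * (k : ℝ) / 2 ^ m ≤ a := by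
          rw [div_le_iff₀ (h2 m)]; nlinarith
        exact mul_le_mul_of_nonneg_left h' hM.le
      have hfb := hf_bdd _ (hmemU m k hk hbMa)
      rw [hXs]
      have h1 : |X m k + a / 2 ^ m * f (a * k / 2 ^ m, X m k) - x₀|
          ≤ |X m k - x₀| + |a / 2 ^ m * f (a * k / 2 ^ m, X m k)| := by
        rw [show X m k + a / 2 ^ m * f (a * k / 2 ^ m, X m k) - x₀
          = (X m k - x₀) + a / 2 ^ m * f (a * k / 2 ^ m, X m k) by ring]
        exact abs_add_le _ _
      have h3 : |a / 2 ^ m * f (a * k / 2 ^ m, X m k)| ≤ a / 2 ^ m * M := by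
        rw [abs_mul, abs_of_pos (by positivity : (0:ℝ) < a / 2 ^ m)]
        exact mul_le_mul_of_nonneg_left hfb (by positivity)
      refine (h1.trans (add_le_add hb h3)).trans (le_of_eq ?_)
      push_cast
      field_simp
  have hmemU' : ∀ m k : ℕ, k ≤ 2 ^ m → (a * k / 2 ^ m, X m k) ∈ U := by
    intro m k hk
    refine hmemU m k hk ((hXbd m k hk).trans ?_)
    have hkr : (k : ℝ) ≤ 2 ^ m := by exact_mod_cast Nat.cast_le.mpr hk
    have h' : a * (k : ℝ) / 2 ^ m ≤ a := by rw [div_le_iff₀ (h2 m)]; nlinarith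
    exact mul_le_mul_of_nonneg_left h' hM.le
  -- distance between iterates
  have hXdist : ∀ m k j : ℕ, k ≤ j → j ≤ 2 ^ m →
      |X m j - X m k| ≤ M * (a * ((j : ℝ) - k) / 2 ^ m) := by
    intro m k j hkj
    induction j, hkj using Nat.le_induction with
    | base => intro _; simp
    | succ j hkj ih =>
      intro hj1
      have hj : j ≤ 2 ^ m := Nat.le_of_succ_le hj1
      have hb := ih hj
      have hfb := hf_bdd _ (hmemU' m j hj)
      rw [hXs]
      have h1 : |X m j + a / 2 ^ m * f (a * j / 2 ^ m, X m j) - X m k|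
          ≤ |X m j - X m k| + |a / 2 ^ m * f (a * j / 2 ^ m, X m j)| := by
        rw [show X m j + a / 2 ^ m * f (a * j / 2 ^ m, X m j) - X m k
          = (X m j - X m k) + a / 2 ^ m * f (a * j / 2 ^ m, X m j) by ring]
        exact abs_add_le _ _
      have h3 : |a / 2 ^ m * f (a * j / 2 ^ m, X m j)| ≤ a / 2 ^ m * M := by
        rw [abs_mul, abs_of_pos (by positivity : (0:ℝ) < a / 2 ^ m)]
        exact mul_le_mul_of_nonneg_left hfb (by positivity)
      refine (h1.trans (add_le_add hb h3)).trans (le_of_eq ?_)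
      push_cast
      field_simp
      ring
  -- x stays in the tube
  have hxmemU : ∀ s ∈ Set.Icc (0:ℝ) a, (s, x s) ∈ U := by
    intro s hs
    have := hx_lip s hs 0 ⟨le_rfl, ha.le⟩
    rw [hx0] at this
    rw [hU]
    refine ⟨hs, ?_⟩
    have habs : |x s - x₀| ≤ M * a := by
      refine this.trans ?_
      rw [sub_zero, abs_of_nonneg hs.1]
      nlinarith [hs.2]
    have := abs_le.1 habs
    constructor <;> simp only [] <;> linarith [this.1, this.2]
  -- Euler quadratic estimate
  have hEuler : ∀ m k j : ℕ, k ≤ j → j ≤ 2 ^ m →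
      |X m j - X m k - (a * ((j : ℝ) - k) / 2 ^ m) * f (a * k / 2 ^ m, X m k)|
        ≤ C * (a * ((j : ℝ) - k) / 2 ^ m) ^ 2 := by
    intro m k j hkj
    induction j, hkj using Nat.le_induction with
    | base => intro _; simp
    | succ j hkj ih =>
      intro hj1
      have hj : j ≤ 2 ^ m := Nat.le_of_succ_le hj1
      have hkj' : k ≤ 2 ^ m := hkj.trans hj
      have hb := ih hj
      have hd := hXdist m k j hkj hj
      have hjk : (0:ℝ) ≤ (j:ℝ) - k := by
        have : (k:ℝ) ≤ j := by exact_mod_cast hkj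
        linarith
      rw [hXs]
      set F := f (a * k / 2 ^ m, X m k) with hF
      set G := f (a * j / 2 ^ m, X m j) with hG
      have hlip := hf_lip _ (hmemU' m j hj) _ (hmemU' m k hkj')
      have hd0 : (0:ℝ) ≤ a * ((j:ℝ) - k) / 2 ^ m :=
        div_nonneg (mul_nonneg ha.le hjk) (h2 m).le
      have hGF : |G - F| ≤ C * (a * ((j:ℝ) - k) / 2 ^ m) := by
        refine hlip.trans ?_
        have habs : |a * (j:ℝ) / 2 ^ m - a * k / 2 ^ m| ≤ a * ((j:ℝ) - k) / 2 ^ m := by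
          rw [show a * (j:ℝ) / 2 ^ m - a * k / 2 ^ m = a * ((j:ℝ) - k) / 2 ^ m by ring,
            abs_of_nonneg hd0]
        rw [hC_def]
        nlinarith [habs, hd, abs_nonneg (a * (j:ℝ) / 2 ^ m - a * k / 2 ^ m)]
      push_cast
      rw [show X m j + a / 2 ^ m * G - X m k - a * ((j:ℝ) + 1 - ↑k) / 2 ^ m * F
          = (X m j - X m k - a * ((j:ℝ) - ↑k) / 2 ^ m * F) + a / 2 ^ m * (G - F) by ring]
      calc |(X m j - X m k - a * ((j:ℝ) - ↑k) / 2 ^ m * F) + a / 2 ^ m * (G - F)|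
          ≤ |X m j - X m k - a * ((j:ℝ) - ↑k) / 2 ^ m * F| + |a / 2 ^ m * (G - F)| :=
            abs_add_le _ _
        _ ≤ C * (a * ((j:ℝ) - ↑k) / 2 ^ m) ^ 2
              + a / 2 ^ m * (C * (a * ((j:ℝ) - ↑k) / 2 ^ m)) := by
            refine add_le_add hb ?_
            rw [abs_mul, abs_of_pos (by positivity : (0:ℝ) < a / 2 ^ m)]
            exact mul_le_mul_of_nonneg_left hGF (by positivity)
        _ ≤ C * (a * ((j:ℝ) + 1 - ↑k) / 2 ^ m) ^ 2 := by
            have hh : (0:ℝ) < a / 2 ^ m := by positivity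
            rw [show a * ((j:ℝ) + 1 - ↑k) / 2 ^ m
                = a * ((j:ℝ) - ↑k) / 2 ^ m + a / 2 ^ m by ring]
            nlinarith [hd0, hh, hC, mul_nonneg (mul_nonneg hC.le hh.le) hh.le,
              mul_nonneg (mul_nonneg hC.le hh.le) hd0]
  -- dyadic quadratic estimate on x
  have hdy : ∀ m k j : ℕ, k ≤ j → j ≤ 2 ^ m →
      |x (a * j / 2 ^ m) - x (a * k / 2 ^ m)
        - (a * ((j : ℝ) - k) / 2 ^ m) * f (a * k / 2 ^ m, x (a * k / 2 ^ m))|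
        ≤ C * (a * ((j : ℝ) - k) / 2 ^ m) ^ 2 := by
    intro m k j hkj hj
    have hk2 : k ≤ 2 ^ m := hkj.trans hj
    have hkn : ∀ n : ℕ, 2 ^ n * k ≤ 2 ^ (m + n) := by
      intro n
      calc 2 ^ n * k ≤ 2 ^ n * 2 ^ m := Nat.mul_le_mul_left _ hk2
        _ = 2 ^ (m + n) := by rw [← pow_add, Nat.add_comm]
    have hjn : ∀ n : ℕ, 2 ^ n * j ≤ 2 ^ (m + n) := by
      intro n
      calc 2 ^ n * j ≤ 2 ^ n * 2 ^ m := Nat.mul_le_mul_left _ hj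
        _ = 2 ^ (m + n) := by rw [← pow_add, Nat.add_comm]
    have hid : ∀ n : ℕ, a * ((2 ^ n * k : ℕ) : ℝ) / 2 ^ (m + n) = a * k / 2 ^ m := by
      intro n; push_cast [pow_add]
      rw [div_eq_div_iff (by positivity) (h2 m).ne']; ring
    have hidj : ∀ n : ℕ, a * ((2 ^ n * j : ℕ) : ℝ) / 2 ^ (m + n) = a * j / 2 ^ m := by
      intro n; push_cast [pow_add]
      rw [div_eq_div_iff (by positivity) (h2 m).ne']; ring
    have hidd : ∀ n : ℕ, a * (((2 ^ n * j : ℕ) : ℝ) - ((2 ^ n * k : ℕ) : ℝ)) / 2 ^ (m + n)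
        = a * ((j:ℝ) - k) / 2 ^ m := by
      intro n; push_cast [pow_add]
      rw [div_eq_div_iff (by positivity) (h2 m).ne']; ring
    have h1 := hx_dyadic m k hk2
    have h1' := hx_dyadic m j hj
    have hFf : Tendsto (fun n : ℕ => f (a * k / 2 ^ m, X (m + n) (2 ^ n * k))) atTop
        (𝓝 (f (a * k / 2 ^ m, x (a * k / 2 ^ m)))) := by
      rw [← tendsto_sub_nhds_zero_iff]
      have hbnd : ∀ n : ℕ,
          ‖f (a * k / 2 ^ m, X (m + n) (2 ^ n * k)) - f (a * k / 2 ^ m, x (a * k / 2 ^ m))‖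
            ≤ L * |X (m + n) (2 ^ n * k) - x (a * k / 2 ^ m)| := by
        intro n
        rw [Real.norm_eq_abs]
        have hm1 : (a * k / 2 ^ m, X (m + n) (2 ^ n * k)) ∈ U := by
          have := hmemU' (m + n) (2 ^ n * k) (hkn n)
          rwa [hid n] at this
        have hm2 : (a * k / 2 ^ m, x (a * k / 2 ^ m)) ∈ U := by
          refine hxmemU _ ⟨by positivity, ?_⟩
          rw [div_le_iff₀ (h2 m)]
          have : (k:ℝ) ≤ 2 ^ m := by exact_mod_cast hk2
          nlinarith
        have h3 := hf_lip _ hm1 _ hm2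
        simp only [sub_self, abs_zero, zero_add] at h3
        linarith [h3]
      have h4 : Tendsto (fun n : ℕ => L * |X (m + n) (2 ^ n * k) - x (a * k / 2 ^ m)|)
          atTop (𝓝 0) := by
        have h5 := ((h1.sub_const (x (a * k / 2 ^ m))).abs.const_mul L)
        simpa using h5
      exact squeeze_zero_norm hbnd h4
    have hE : Tendsto (fun n : ℕ => X (m + n) (2 ^ n * j) - X (m + n) (2 ^ n * k)
        - a * ((j:ℝ) - k) / 2 ^ m * f (a * k / 2 ^ m, X (m + n) (2 ^ n * k))) atTop
        (𝓝 (x (a * j / 2 ^ m) - x (a * k / 2 ^ m)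
          - a * ((j:ℝ) - k) / 2 ^ m * f (a * k / 2 ^ m, x (a * k / 2 ^ m)))) :=
      (h1'.sub h1).sub (hFf.const_mul _)
    refine le_of_tendsto' hE.abs ?_
    intro n
    have h5 := hEuler (m + n) (2 ^ n * k) (2 ^ n * j) (Nat.mul_le_mul_left _ hkj) (hjn n)
    rwa [hid n, hidd n] at h5
  -- lipschitz of t ↦ f (t, x t)
  have hgf : ∀ s ∈ Set.Icc (0:ℝ) a, ∀ t ∈ Set.Icc (0:ℝ) a,
      |f (s, x s) - f (t, x t)| ≤ C * |s - t| := by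
    intro s hs t ht
    have h := hf_lip _ (hxmemU s hs) _ (hxmemU t ht)
    simp only [] at h
    refine h.trans ?_
    have := hx_lip s hs t ht
    rw [hC_def]
    nlinarith [abs_nonneg (s - t)]
  -- two-sided dyadic estimate
  have hdy2 : ∀ m k j : ℕ, k ≤ 2 ^ m → j ≤ 2 ^ m →
      |x (a * j / 2 ^ m) - x (a * k / 2 ^ m)
        - (a * j / 2 ^ m - a * k / 2 ^ m) * f (a * k / 2 ^ m, x (a * k / 2 ^ m))|
        ≤ 2 * C * (a * j / 2 ^ m - a * k / 2 ^ m) ^ 2 := by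
    intro m k j hk hj
    have hmem : ∀ i : ℕ, i ≤ 2 ^ m → a * (i:ℝ) / 2 ^ m ∈ Set.Icc (0:ℝ) a := by
      intro i hi
      have : (i:ℝ) ≤ 2 ^ m := by exact_mod_cast hi
      refine ⟨by positivity, ?_⟩
      rw [div_le_iff₀ (h2 m)]; nlinarith
    rcases le_or_gt k j with hkj | hjk
    · have h := hdy m k j hkj hj
      rw [show a * ((j:ℝ) - k) / 2 ^ m = a * j / 2 ^ m - a * k / 2 ^ m by ring] at h
      refine h.trans ?_
      nlinarith [sq_nonneg (a * (j:ℝ) / 2 ^ m - a * k / 2 ^ m), hC]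
    · have h := hdy m j k hjk.le hk
      rw [show a * ((k:ℝ) - j) / 2 ^ m = a * k / 2 ^ m - a * j / 2 ^ m by ring] at h
      have hg := hgf _ (hmem k hk) _ (hmem j hj)
      have hts : a * (j:ℝ) / 2 ^ m ≤ a * k / 2 ^ m := by
        have hjk2 : (j:ℝ) ≤ k := by exact_mod_cast hjk.le
        gcongr
      set sk := a * (k:ℝ) / 2 ^ m
      set sj := a * (j:ℝ) / 2 ^ m
      have key : x sj - x sk - (sj - sk) * f (sk, x sk)
          = -(x sk - x sj - (sk - sj) * f (sj, x sj))
            - (sj - sk) * (f (sk, x sk) - f (sj, x sj)) := by ring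
      rw [key]
      have t1 : |-(x sk - x sj - (sk - sj) * f (sj, x sj))
          - (sj - sk) * (f (sk, x sk) - f (sj, x sj))|
          ≤ |x sk - x sj - (sk - sj) * f (sj, x sj)|
            + |sj - sk| * |f (sk, x sk) - f (sj, x sj)| := by
        refine (abs_sub _ _).trans ?_
        rw [abs_neg, abs_mul]
      refine t1.trans ?_
      have habs : |sk - sj| = sk - sj := abs_of_nonneg (by linarith)
      have habs2 : |sj - sk| = sk - sj := by rw [abs_sub_comm, habs]
      rw [habs2]
      rw [habs] at hg
      have h6 := mul_le_mul_of_nonneg_left hg (sub_nonneg.2 hts)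
      have h7 : (sk - sj) * (C * (sk - sj)) = C * (sk - sj) ^ 2 := by ring
      rw [show (sj - sk) ^ 2 = (sk - sj) ^ 2 by ring]
      linarith [h, h6, h7.le, h7.ge]
  -- key estimate for all reals
  have hkey : ∀ s ∈ Set.Icc (0:ℝ) a, ∀ t ∈ Set.Icc (0:ℝ) a,
      |x t - x s - (t - s) * f (s, x s)| ≤ 2 * C * (t - s) ^ 2 := by
    have hfl : ∀ u ∈ Set.Icc (0:ℝ) a, ∀ m : ℕ,
        ⌊2 ^ m * u / a⌋₊ ≤ 2 ^ m ∧ a * (⌊2 ^ m * u / a⌋₊ : ℝ) / 2 ^ m ∈ Set.Icc (0:ℝ) a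
          ∧ |a * (⌊2 ^ m * u / a⌋₊ : ℝ) / 2 ^ m - u| ≤ a / 2 ^ m := by
      intro u hu m
      have hp := h2 m
      have h0 : (0:ℝ) ≤ 2 ^ m * u / a := div_nonneg (mul_nonneg hp.le hu.1) ha.le
      have hle : 2 ^ m * u / a ≤ 2 ^ m := by
        rw [div_le_iff₀ ha]; nlinarith [hu.2]
      have hkle : ⌊2 ^ m * u / a⌋₊ ≤ 2 ^ m := by
        have h' : (2:ℝ) ^ m * u / a ≤ ((2 ^ m : ℕ) : ℝ) := by push_cast; exact hle
        calc ⌊2 ^ m * u / a⌋₊ ≤ ⌊((2 ^ m : ℕ) : ℝ)⌋₊ := Nat.floor_le_floor h'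
          _ = 2 ^ m := Nat.floor_natCast _
      have hlo : (⌊2 ^ m * u / a⌋₊ : ℝ) ≤ 2 ^ m * u / a := Nat.floor_le h0
      have hhi : 2 ^ m * u / a < (⌊2 ^ m * u / a⌋₊ : ℝ) + 1 := Nat.lt_floor_add_one _
      have h1 : 2 ^ m * u < a * ((⌊2 ^ m * u / a⌋₊ : ℝ) + 1) := by
        rw [div_lt_iff₀ ha] at hhi; linarith
      have h2' : a * (⌊2 ^ m * u / a⌋₊ : ℝ) ≤ 2 ^ m * u := by
        rw [le_div_iff₀ ha] at hlo; linarith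
      refine ⟨hkle, ⟨by positivity, ?_⟩, ?_⟩
      · rw [div_le_iff₀ hp]
        have : ((⌊2 ^ m * u / a⌋₊ : ℕ) : ℝ) ≤ 2 ^ m := by exact_mod_cast hkle
        nlinarith
      · have e : a * (⌊2 ^ m * u / a⌋₊ : ℝ) / 2 ^ m - u
            = (a * (⌊2 ^ m * u / a⌋₊ : ℝ) - u * 2 ^ m) / 2 ^ m := by
          field_simp
        rw [e, abs_div, abs_of_pos hp, div_le_div_iff₀ hp hp]
        have hnum : |a * (⌊2 ^ m * u / a⌋₊ : ℝ) - u * 2 ^ m| ≤ a := by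
          rw [abs_le]
          constructor
          · nlinarith [h1]
          · nlinarith [h2']
        nlinarith [mul_le_mul_of_nonneg_right hnum hp.le]
    intro s hs t ht
    have hhalf : Tendsto (fun m : ℕ => a / 2 ^ m) atTop (𝓝 0) := by
      have h0 := tendsto_pow_atTop_nhds_zero_of_lt_one (by norm_num : (0:ℝ) ≤ 1/2)
        (by norm_num : (1/2:ℝ) < 1)
      have h1 := h0.const_mul a
      rw [mul_zero] at h1
      refine h1.congr (fun m => ?_)
      rw [div_pow, one_pow]
      ring
    have happrox : ∀ u ∈ Set.Icc (0:ℝ) a,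
        Tendsto (fun m : ℕ => a * (⌊2 ^ m * u / a⌋₊ : ℝ) / 2 ^ m) atTop (𝓝 u) := by
      intro u hu
      rw [← tendsto_sub_nhds_zero_iff]
      refine squeeze_zero_norm (fun m => ?_) hhalf
      rw [Real.norm_eq_abs]
      exact (hfl u hu m).2.2
    have hsm := happrox s hs
    have htm := happrox t ht
    have hxsm : Tendsto (fun m : ℕ => x (a * (⌊2 ^ m * s / a⌋₊ : ℝ) / 2 ^ m))
        atTop (𝓝 (x s)) := by
      rw [← tendsto_sub_nhds_zero_iff]
      refine squeeze_zero_norm (fun m => ?_)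
        (by simpa using ((hsm.sub_const s).abs.const_mul M))
      rw [Real.norm_eq_abs]
      exact hx_lip _ (hfl s hs m).2.1 s hs
    have hxtm : Tendsto (fun m : ℕ => x (a * (⌊2 ^ m * t / a⌋₊ : ℝ) / 2 ^ m))
        atTop (𝓝 (x t)) := by
      rw [← tendsto_sub_nhds_zero_iff]
      refine squeeze_zero_norm (fun m => ?_)
        (by simpa using ((htm.sub_const t).abs.const_mul M))
      rw [Real.norm_eq_abs]
      exact hx_lip _ (hfl t ht m).2.1 t ht
    have hfsm : Tendsto (fun m : ℕ => f (a * (⌊2 ^ m * s / a⌋₊ : ℝ) / 2 ^ m,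
        x (a * (⌊2 ^ m * s / a⌋₊ : ℝ) / 2 ^ m))) atTop (𝓝 (f (s, x s))) := by
      rw [← tendsto_sub_nhds_zero_iff]
      refine squeeze_zero_norm (fun m => ?_)
        (by simpa using ((hsm.sub_const s).abs.const_mul C))
      rw [Real.norm_eq_abs]
      exact hgf _ (hfl s hs m).2.1 s hs
    have hA : Tendsto (fun m : ℕ =>
        x (a * (⌊2 ^ m * t / a⌋₊ : ℝ) / 2 ^ m) - x (a * (⌊2 ^ m * s / a⌋₊ : ℝ) / 2 ^ m)
        - (a * (⌊2 ^ m * t / a⌋₊ : ℝ) / 2 ^ m - a * (⌊2 ^ m * s / a⌋₊ : ℝ) / 2 ^ m)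
          * f (a * (⌊2 ^ m * s / a⌋₊ : ℝ) / 2 ^ m, x (a * (⌊2 ^ m * s / a⌋₊ : ℝ) / 2 ^ m)))
        atTop (𝓝 (x t - x s - (t - s) * f (s, x s))) :=
      (hxtm.sub hxsm).sub ((htm.sub hsm).mul hfsm)
    have hB : Tendsto (fun m : ℕ => 2 * C *
        (a * (⌊2 ^ m * t / a⌋₊ : ℝ) / 2 ^ m - a * (⌊2 ^ m * s / a⌋₊ : ℝ) / 2 ^ m) ^ 2)
        atTop (𝓝 (2 * C * (t - s) ^ 2)) := ((htm.sub hsm).pow 2).const_mul (2 * C)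
    refine le_of_tendsto_of_tendsto' hA.abs hB (fun m => ?_)
    exact hdy2 m _ _ (hfl s hs m).1 (hfl t ht m).1
  refine ⟨hx0, ?_⟩
  intro t ht
  rw [hasDerivWithinAt_iff_isLittleO]
  rw [Asymptotics.isLittleO_iff]
  intro ε hε
  have hev : ∀ᶠ y in 𝓝[Set.Icc (0:ℝ) a] t, |y - t| < ε / (2 * C) :=
    (eventually_abs_sub_lt t (by positivity)).filter_mono nhdsWithin_le_nhds
  filter_upwards [self_mem_nhdsWithin, hev] with y hy hlt
  have hk := hkey t ht y hy
  rw [Real.norm_eq_abs, Real.norm_eq_abs, smul_eq_mul]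
  have h1 : |y - t| ≥ 0 := abs_nonneg _
  have h2' : (y - t) ^ 2 = |y - t| ^ 2 := (sq_abs _).symm
  rw [h2'] at hk
  have h4 : 2 * C * |y - t| ≤ ε := by
    rw [lt_div_iff₀ (by positivity)] at hlt
    nlinarith [hlt]
  nlinarith [hk, h4, h1]
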